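/- arXiv:0806.1261 — 3 statements merged into one kernel-verified Lean document; each statement's English description precedes it below -/
import Mathlib

section
/- Let V be a finite-dimensional real vector space, D ⊆ V ⊕ V* a Lagrangian subspace for the pairing ⟨(u,α),(v,β)⟩ = β(u) + α(v), and let G₁ = {v ∈ V : ∃α, (v,α) ∈ D}, G₀ = {v ∈ V : (v,0) ∈ D}. Then there exists a skew-symmetric bilinear form ω on G₁ such that D = {(v,α) : v ∈ G₁ and α|_{G₁} = ω(v,·)}, and the kernel of ω (as a form on G₁) equals G₀. -/
open Module

/-- The canonical symmetric pairing on `V ⊕ V*`: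
`⟨(u,α),(v,β)⟩ = β(u) + α(v)`. -/
noncomputable def pairingForm (V : Type*) [AddCommGroup V] [Module ℝ V] :
    LinearMap.BilinForm ℝ (V × Module.Dual ℝ V) :=
  LinearMap.mk₂ ℝ (fun p q => q.2 p.1 + p.2 q.1)
    (fun p p' q => by
      simp only [Prod.fst_add, Prod.snd_add, map_add, LinearMap.add_apply]; ring)
    (fun c p q => by
      simp only [Prod.smul_fst, Prod.smul_snd, map_smul, LinearMap.smul_apply,
        smul_eq_mul]; ring)
    (fun p q q' => by
      simp only [Prod.fst_add, Prod.snd_add, map_add, LinearMap.add_apply]; ring)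
    (fun p c q => by
      simp only [Prod.smul_fst, Prod.smul_snd, map_smul, LinearMap.smul_apply,
        smul_eq_mul]; ring)


/-- a Lagrangian subspace `D ⊆ V ⊕ V*` is determined by a
skew-symmetric bilinear form `ω` on `G₁ = pr₁(D)`:
`D = {(v,α) | v ∈ G₁, α|_{G₁} = ω(v,·)}`, and the kernel of `ω` on `G₁`
is exactly `G₀ = {v | (v,0) ∈ D}`. -/
theorem lagrangian_is_graph_on_G1
    (V : Type*) [AddCommGroup V] [Module ℝ V] [FiniteDimensional ℝ V]
    (D : Submodule ℝ (V × Module.Dual ℝ V))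
    (hD : D = (pairingForm V).orthogonal D)
    (G₁ : Submodule ℝ V)
    (hG₁ : (G₁ : Set V) = {v : V | ∃ α : Module.Dual ℝ V, (v, α) ∈ D}) :
    ∃ ω : LinearMap.BilinForm ℝ G₁,
      (∀ x y : G₁, ω x y = -(ω y x)) ∧
      (∀ (v : V) (α : Module.Dual ℝ V),
        (v, α) ∈ D ↔ ∃ hv : v ∈ G₁, ∀ w : G₁, α (w : V) = ω ⟨v, hv⟩ w) ∧
      (∀ x : G₁, (∀ y : G₁, ω x y = 0) ↔
        ((x : V), (0 : Module.Dual ℝ V)) ∈ D) := by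
  have hmem : ∀ v : V, v ∈ G₁ ↔ ∃ α : Module.Dual ℝ V, (v, α) ∈ D := by
    intro v
    constructor
    · intro hv
      have : v ∈ (G₁ : Set V) := hv
      rw [hG₁] at this; exact this
    · intro h
      show v ∈ (G₁ : Set V)
      rw [hG₁]; exact h
  have hpair : ∀ p ∈ D, ∀ q ∈ D,
      (q.2 p.1 + p.2 q.1 : ℝ) = 0 := by
    intro p hp q hq
    have hq' : q ∈ (pairingForm V).orthogonal D := hD ▸ hq
    have := hq' p hp
    simpa [pairingForm] using this
  -- the projection D → G₁
  let p1 : D →ₗ[ℝ] G₁ :=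
    { toFun := fun d => ⟨(d : V × Module.Dual ℝ V).1,
        (hmem _).2 ⟨(d : V × Module.Dual ℝ V).2, by simp only [Prod.mk.eta]; exact d.2⟩⟩
      map_add' := fun a b => rfl
      map_smul' := fun c a => rfl }
  -- the restriction map D → Dual G₁
  let p2 : D →ₗ[ℝ] Module.Dual ℝ G₁ :=
    (G₁.subtype.dualMap) ∘ₗ ((LinearMap.snd ℝ V (Module.Dual ℝ V)) ∘ₗ D.subtype)
  have hp2 : ∀ (d : D) (w : G₁), p2 d w = (d : V × Module.Dual ℝ V).2 (w : V) := by
    intro d w; rfl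
  have key : ∀ a ∈ D, ∀ b ∈ D, (a : V × Module.Dual ℝ V).1 = (b : V × Module.Dual ℝ V).1 →
      ∀ w : G₁, (a : V × Module.Dual ℝ V).2 (w : V) = (b : V × Module.Dual ℝ V).2 (w : V) := by
    intro a ha b hb hab w
    obtain ⟨β, hβ⟩ := (hmem (w : V)).1 w.2
    have h1 := hpair ((w : V), β) hβ a ha
    have h2 := hpair ((w : V), β) hβ b hb
    simp only at h1 h2
    rw [hab] at h1
    linarith
  have hsurj : Function.Surjective p1 := by
    intro x
    obtain ⟨α, hα⟩ := (hmem (x : V)).1 x.2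
    exact ⟨⟨((x : V), α), hα⟩, Subtype.ext rfl⟩
  obtain ⟨s, hs⟩ := p1.exists_rightInverse_of_surjective
    (LinearMap.range_eq_top.mpr hsurj)
  let ω : LinearMap.BilinForm ℝ G₁ := p2 ∘ₗ s
  have hω : ∀ (d : D) (w : G₁), ω (p1 d) w = (d : V × Module.Dual ℝ V).2 (w : V) := by
    intro d w
    have h0 := LinearMap.congr_fun hs (p1 d)
    simp only [LinearMap.coe_comp, Function.comp_apply, LinearMap.id_coe, id_eq] at h0
    have h1 : ((s (p1 d) : D) : V × Module.Dual ℝ V).1 = (d : V × Module.Dual ℝ V).1 :=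
      congrArg Subtype.val h0
    have h2 := key (s (p1 d)) (s (p1 d)).2 d d.2 h1 w
    calc ω (p1 d) w = p2 (s (p1 d)) w := rfl
      _ = ((s (p1 d) : D) : V × Module.Dual ℝ V).2 (w : V) := hp2 _ _
      _ = (d : V × Module.Dual ℝ V).2 (w : V) := h2
  have hωval : ∀ (v : V) (α : Module.Dual ℝ V) (h : (v, α) ∈ D)
      (hv : v ∈ G₁) (w : G₁), ω ⟨v, hv⟩ w = α (w : V) := by
    intro v α h hv w
    have h1 : p1 ⟨(v, α), h⟩ = ⟨v, hv⟩ := Subtype.ext rfl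
    have := hω ⟨(v, α), h⟩ w
    rw [h1] at this
    exact this
  refine ⟨ω, ?_, ?_, ?_⟩
  · intro x y
    obtain ⟨α, hα⟩ := (hmem (x : V)).1 x.2
    obtain ⟨β, hβ⟩ := (hmem (y : V)).1 y.2
    have h1 : ω x y = α (y : V) := by
      have := hωval (x : V) α hα x.2 y
      simpa using this
    have h2 : ω y x = β (x : V) := by
      have := hωval (y : V) β hβ y.2 x
      simpa using this
    have := hpair ((x : V), α) hα ((y : V), β) hβ
    simp only at this
    rw [h1, h2]; linarith
  · intro v α
    constructor
    · intro h
      have hv : v ∈ G₁ := (hmem v).2 ⟨α, h⟩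
      exact ⟨hv, fun w => (hωval v α h hv w).symm⟩
    · rintro ⟨hv, hα⟩
      obtain ⟨α₀, hα₀⟩ := (hmem v).1 hv
      have hres : ∀ w : G₁, (α - α₀) (w : V) = 0 := by
        intro w
        have h1 := hα w
        have h2 := hωval v α₀ hα₀ hv w
        simp only [LinearMap.sub_apply]
        rw [h1, h2]; ring
      have hz : ((0 : V), α - α₀) ∈ D := by
        rw [hD]
        intro p hp
        have hp1 : p.1 ∈ G₁ := (hmem p.1).2 ⟨p.2, by simpa using hp⟩
        have := hres ⟨p.1, hp1⟩
        simpa [LinearMap.BilinForm.isOrtho_def, pairingForm] using this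
      have : ((v, α₀) + ((0 : V), α - α₀)) ∈ D := D.add_mem hα₀ hz
      simpa using this
  · intro x
    constructor
    · intro h
      obtain ⟨α₀, hα₀⟩ := (hmem (x : V)).1 x.2
      have hres : ∀ w : G₁, (0 : Module.Dual ℝ V) (w : V) = ω ⟨(x : V), x.2⟩ w := by
        intro w
        have := h w
        simp only [LinearMap.zero_apply]
        have hx : (⟨(x : V), x.2⟩ : G₁) = x := Subtype.ext rfl
        rw [hx, this]
      -- repeat the graph argument
      have h2 := hωval (x : V) α₀ hα₀ x.2
      have hz : ((0 : V), (0 : Module.Dual ℝ V) - α₀) ∈ D := by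
        rw [hD]
        intro p hp
        have hp1 : p.1 ∈ G₁ := (hmem p.1).2 ⟨p.2, by simpa using hp⟩
        have e1 : α₀ ((⟨p.1, hp1⟩ : G₁) : V) = ω ⟨(x : V), x.2⟩ ⟨p.1, hp1⟩ := (h2 ⟨p.1, hp1⟩).symm
        have hx : (⟨(x : V), x.2⟩ : G₁) = x := Subtype.ext rfl
        rw [hx] at e1
        have e2 := h ⟨p.1, hp1⟩
        simp only [LinearMap.BilinForm.isOrtho_def, pairingForm, LinearMap.mk₂_apply,
          LinearMap.sub_apply, LinearMap.zero_apply, map_zero]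
        rw [e1, e2]; ring
      have : (((x : V), α₀) + ((0 : V), (0 : Module.Dual ℝ V) - α₀)) ∈ D :=
        D.add_mem hα₀ hz
      simpa using this
    · intro h y
      have := hωval (x : V) 0 h x.2 y
      have hx : (⟨(x : V), x.2⟩ : G₁) = x := Subtype.ext rfl
      rw [hx] at this
      simpa using this
end

section
/- Let V be a finite-dimensional real vector space, D ⊆ V ⊕ V* a Lagrangian subspace for the pairing ⟨(u,α),(v,β)⟩ = β(u) + α(v), and K ⊆ V a subspace. Set 𝒦 = K ⊕ {0} ⊆ V ⊕ V*, so 𝒦^⊥ = V ⊕ K° where K° is the annihilator of K. Then the subspace D̃ = ((D ∩ 𝒦^⊥) + 𝒦)/𝒦 of 𝒦^⊥/𝒦 satisfies D̃ = D̃^⊥ with respect to the symmetric bilinear form induced on 𝒦^⊥/𝒦 by the pairing on V ⊕ V*. -/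
open Module

variable (V : Type*) [AddCommGroup V] [Module ℝ V]

/-- `𝒦 = K ⊕ {0} ⊆ V ⊕ V*`. -/
noncomputable def Kdirac (K : Submodule ℝ V) : Submodule ℝ (V × Module.Dual ℝ V) :=
  K.prod ⊥

/-- `𝒦^⊥ = V ⊕ K°`, the orthogonal of `𝒦` for the canonical pairing. -/
noncomputable def KdiracPerp (K : Submodule ℝ V) : Submodule ℝ (V × Module.Dual ℝ V) :=
  (⊤ : Submodule ℝ V).prod K.dualAnnihilator

/-- The reduced subspace `D̃ = ((D ∩ 𝒦^⊥) + 𝒦)/𝒦`, realized as a submodule of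
the quotient `(V ⊕ V*)/𝒦`; it is contained in `𝒦^⊥/𝒦`. -/
noncomputable def Dtilde (D : Submodule ℝ (V × Module.Dual ℝ V)) (K : Submodule ℝ V) :
    Submodule ℝ ((V × Module.Dual ℝ V) ⧸ Kdirac V K) :=
  ((D ⊓ KdiracPerp V K) ⊔ Kdirac V K).map (Kdirac V K).mkQ

lemma pairingForm_apply {V : Type*} [AddCommGroup V] [Module ℝ V]
    (p q : V × Module.Dual ℝ V) : pairingForm V p q = q.2 p.1 + p.2 q.1 := rfl

lemma pairingForm_isRefl : (pairingForm V).IsRefl := by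
  intro x y h
  rw [pairingForm_apply] at h ⊢
  linarith

lemma pairingForm_nondegenerate : (pairingForm V).Nondegenerate := by
  refine (pairingForm_isRefl V).nondegenerate_iff_separatingLeft.mpr ?_
  intro x h
  have h2 : x.2 = 0 := by
    ext v
    have := h (v, 0)
    simpa [pairingForm_apply] using this
  have h1 : x.1 = 0 := by
    rw [← Module.forall_dual_apply_eq_zero_iff ℝ x.1]
    intro φ
    have := h (0, φ)
    simpa [pairingForm_apply] using this
  exact Prod.ext h1 h2

lemma pairingForm_orthogonal_sup (A C : Submodule ℝ (V × Module.Dual ℝ V)) :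
    (pairingForm V).orthogonal (A ⊔ C)
      = (pairingForm V).orthogonal A ⊓ (pairingForm V).orthogonal C := by
  ext m
  simp only [LinearMap.BilinForm.mem_orthogonal_iff, Submodule.mem_inf]
  constructor
  · intro h
    exact ⟨fun n hn => h n (Submodule.mem_sup_left hn),
           fun n hn => h n (Submodule.mem_sup_right hn)⟩
  · rintro ⟨hA, hC⟩ n hn
    obtain ⟨a, ha, c, hc, rfl⟩ := Submodule.mem_sup.mp hn
    show pairingForm V (a + c) m = 0
    rw [map_add, LinearMap.add_apply, hA a ha, hC c hc, add_zero]

lemma pairingForm_orthogonal_Kdirac (K : Submodule ℝ V) :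
    (pairingForm V).orthogonal (Kdirac V K) = KdiracPerp V K := by
  ext x
  simp only [LinearMap.BilinForm.mem_orthogonal_iff, KdiracPerp, Kdirac,
    Submodule.mem_prod, Submodule.mem_top, true_and, Submodule.mem_bot,
    Submodule.mem_dualAnnihilator]
  constructor
  · intro h u hu
    have := h (u, 0) ⟨hu, rfl⟩
    simpa [LinearMap.BilinForm.IsOrtho, pairingForm_apply] using this
  · rintro h n ⟨hn1, hn2⟩
    show pairingForm V n x = 0
    rw [pairingForm_apply, hn2, h n.1 hn1]
    simp

/-- for a Lagrangian `D ⊆ V ⊕ V*` and a subspace `K ⊆ V`, the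
subspace `D̃ = ((D ∩ 𝒦^⊥) + 𝒦)/𝒦` of `𝒦^⊥/𝒦` satisfies `D̃ = D̃^⊥` for the
symmetric bilinear form induced on `𝒦^⊥/𝒦` by the canonical pairing.  (Here
`B̄` is any bilinear form on the quotient that descends the pairing on `𝒦^⊥`,
and the orthogonal complement of `D̃` is taken inside `𝒦^⊥/𝒦`.) -/
theorem Dtilde_isLagrangian
    [FiniteDimensional ℝ V]
    (D : Submodule ℝ (V × Module.Dual ℝ V))
    (hD : D = (pairingForm V).orthogonal D)
    (K : Submodule ℝ V)
    (Bbar : LinearMap.BilinForm ℝ ((V × Module.Dual ℝ V) ⧸ Kdirac V K))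
    (hBbar : ∀ x ∈ KdiracPerp V K, ∀ y ∈ KdiracPerp V K,
      Bbar ((Kdirac V K).mkQ x) ((Kdirac V K).mkQ y) = pairingForm V x y) :
    Dtilde V D K
      = ((KdiracPerp V K).map (Kdirac V K).mkQ) ⊓ Bbar.orthogonal (Dtilde V D K) := by
  have hrefl := pairingForm_isRefl V
  have hnd := pairingForm_nondegenerate V
  have h𝒦le : Kdirac V K ≤ KdiracPerp V K := by
    rintro ⟨u, α⟩ ⟨hu, hα⟩
    refine ⟨Submodule.mem_top, ?_⟩
    have hα0 : α = 0 := by simpa using hα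
    rw [hα0]
    exact Submodule.zero_mem _
  have hMle : (D ⊓ KdiracPerp V K) ⊔ Kdirac V K ≤ KdiracPerp V K :=
    sup_le inf_le_right h𝒦le
  have hK : (pairingForm V).orthogonal (Kdirac V K) = KdiracPerp V K :=
    pairingForm_orthogonal_Kdirac V K
  have hDK : D ⊓ KdiracPerp V K = (pairingForm V).orthogonal (D ⊔ Kdirac V K) := by
    rw [pairingForm_orthogonal_sup, ← hD, hK]
  have hMorth : (pairingForm V).orthogonal ((D ⊓ KdiracPerp V K) ⊔ Kdirac V K)
      = (D ⊓ KdiracPerp V K) ⊔ Kdirac V K := by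
    have h1 : (pairingForm V).orthogonal ((D ⊓ KdiracPerp V K) ⊔ Kdirac V K)
        = (D ⊔ Kdirac V K) ⊓ KdiracPerp V K := by
      rw [pairingForm_orthogonal_sup, hDK,
        LinearMap.BilinForm.orthogonal_orthogonal hnd hrefl, hK]
    have h2 : (D ⊓ KdiracPerp V K) ⊔ Kdirac V K
        = (Kdirac V K ⊔ D) ⊓ KdiracPerp V K := by
      rw [sup_inf_assoc_of_le _ h𝒦le, sup_comm]
    rw [h1, h2, sup_comm]
  ext z
  constructor
  · rintro ⟨x, hx, rfl⟩
    refine ⟨⟨x, hMle hx, rfl⟩, ?_⟩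
    rintro n ⟨y, hy, rfl⟩
    show Bbar ((Kdirac V K).mkQ y) ((Kdirac V K).mkQ x) = 0
    rw [hBbar y (hMle hy) x (hMle hx)]
    have hx' : x ∈ (pairingForm V).orthogonal ((D ⊓ KdiracPerp V K) ⊔ Kdirac V K) := by
      rw [hMorth]; exact hx
    exact hx' y hy
  · rintro ⟨⟨x, hx𝒦p, rfl⟩, hz⟩
    have hx : x ∈ (pairingForm V).orthogonal ((D ⊓ KdiracPerp V K) ⊔ Kdirac V K) := by
      intro y hy
      have h0 : Bbar ((Kdirac V K).mkQ y) ((Kdirac V K).mkQ x) = 0 :=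
        hz ((Kdirac V K).mkQ y) ⟨y, hy, rfl⟩
      show pairingForm V y x = 0
      rw [← hBbar y (hMle hy) x hx𝒦p]
      exact h0
    rw [hMorth] at hx
    exact ⟨x, hx, rfl⟩
end

section
/- Let (V, ω) be a finite-dimensional vector space with skew-symmetric bilinear form ω, H ⊆ V a subspace on which ω restricts to a nondegenerate form, and W ⊆ V another subspace. Set U = H ∩ (H ∩ W)^{ω}, where (H ∩ W)^{ω} denotes the ω-orthogonal complement in V. Then the restriction of ω to U has kernel (on U) equal to (H ∩ W) ∩ (H ∩ W)^{ω_H}, where ω_H is the restriction of ω to H; moreover if additionally ω restricted to H ∩ W is nondegenerate, then ω restricted to U is nondegenerate. -/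
/-- let `(V,ω)` be a finite-dimensional space with a
skew-symmetric bilinear form, `H ⊆ V` a subspace on which `ω` is
nondegenerate, and `W ⊆ V` another subspace.  With
`U = H ∩ (H ∩ W)^ω`, the kernel of `ω` restricted to `U` equals
`(H ∩ W) ∩ (H ∩ W)^{ω_H}` (the latter orthogonal taken inside `H`);
and if moreover `ω` is nondegenerate on `H ∩ W` then `ω` is nondegenerate
on `U`. -/
theorem horizontal_annihilator_kernel
    (V : Type*) [AddCommGroup V] [Module ℝ V] [FiniteDimensional ℝ V]
    (ω : LinearMap.BilinForm ℝ V) (hskew : ∀ v w : V, ω v w = -(ω w v))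
    (H W : Submodule ℝ V)
    (hH : ∀ h ∈ H, (∀ h' ∈ H, ω h h' = 0) → h = 0) :
    ((H ⊓ ω.orthogonal (H ⊓ W)) ⊓ ω.orthogonal (H ⊓ ω.orthogonal (H ⊓ W))
        = (H ⊓ W) ⊓ (H ⊓ ω.orthogonal (H ⊓ W))) ∧
    ((∀ v ∈ H ⊓ W, (∀ w ∈ H ⊓ W, ω v w = 0) → v = 0) →
      ∀ v ∈ H ⊓ ω.orthogonal (H ⊓ W),
        (∀ w ∈ H ⊓ ω.orthogonal (H ⊓ W), ω v w = 0) → v = 0) := by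
  set ωH : LinearMap.BilinForm ℝ H := ω.restrict H with hωH
  have hrefl : ωH.IsRefl := by
    intro x y h
    simp only [hωH, LinearMap.BilinForm.restrict_apply, LinearMap.domRestrict_apply] at h ⊢
    rw [hskew, h, neg_zero]
  have hnd : ωH.Nondegenerate := by
    refine (LinearMap.IsRefl.nondegenerate_iff_separatingLeft hrefl).mpr ?_
    intro x hx
    have : (x : V) = 0 := hH x x.2 (fun h' hh' => hx ⟨h', hh'⟩)
    exact Subtype.ext this
  set S' : Submodule ℝ H := (H ⊓ W).comap H.subtype with hS'
  have horth : ∀ x : H, x ∈ ωH.orthogonal S' ↔ (x : V) ∈ ω.orthogonal (H ⊓ W) := by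
    intro x
    constructor
    · intro hx s hs
      exact hx ⟨s, hs.1⟩ hs
    · intro hx n hn
      exact hx (n : V) (by simpa [hS', Submodule.mem_inf] using hn)
  have hdouble := LinearMap.BilinForm.orthogonal_orthogonal hnd hrefl S'
  have key : ∀ v ∈ H ⊓ ω.orthogonal (H ⊓ W),
      (∀ w ∈ H ⊓ ω.orthogonal (H ⊓ W), ω v w = 0) → v ∈ H ⊓ W := by
    intro v hv hvU
    obtain ⟨hvH, hvO⟩ := hv
    have hx : (⟨v, hvH⟩ : H) ∈ ωH.orthogonal (ωH.orthogonal S') := by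
      intro n hn
      show ωH n ⟨v, hvH⟩ = 0
      have h1 : ω v (n : V) = 0 := hvU (n : V) ⟨n.2, (horth n).mp hn⟩
      simp only [hωH, LinearMap.BilinForm.restrict_apply, LinearMap.domRestrict_apply]
      rw [hskew, h1, neg_zero]
    rw [hdouble] at hx
    have : (⟨v, hvH⟩ : H) ∈ S' := hx
    simpa [hS'] using (Submodule.mem_comap.mp this)
  constructor
  · apply le_antisymm
    · rintro v ⟨⟨hvH, hvO⟩, hvU⟩
      have hvU' : ∀ w ∈ H ⊓ ω.orthogonal (H ⊓ W), ω v w = 0 := by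
        intro w hw
        have : ω w v = 0 := hvU w hw
        rw [hskew, this, neg_zero]
      exact ⟨key v ⟨hvH, hvO⟩ hvU', hvH, hvO⟩
    · rintro v ⟨hvHW, hvH, hvO⟩
      refine ⟨⟨hvH, hvO⟩, ?_⟩
      rintro u ⟨huH, huO⟩
      show ω u v = 0
      have : ω v u = 0 := huO v hvHW
      rw [hskew, this, neg_zero]
  · intro hndHW v hv hvU
    obtain ⟨hvH, hvO⟩ := hv
    have hvHW : v ∈ H ⊓ W := key v ⟨hvH, hvO⟩ hvU
    refine hndHW v hvHW (fun w hw => ?_)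
    have : ω w v = 0 := hvO w hw
    rw [hskew, this, neg_zero]
end
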